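/- Define rational numbers β_n for n ≥ 2 by the recurrence β_n = −∑_{j=2}^{n-1} β_j/(n−j+1)! + 1/(n+1)! − 1/(2^n·n!). Then for all n ≥ 2, β_n = (B_n/n!)·(1 − 1/2^{n−1}), where B_n is the n-th Bernoulli number. -/

import Mathlib

private lemma split_sum (n : ℕ) (hn : 2 ≤ n) (f : ℕ → ℚ) :
    ∑ j ∈ Finset.range (n+1), f j = f 0 + f 1 + ∑ j ∈ Finset.Icc 2 n, f j := by
  have h : Finset.range (n+1) = insert 0 (insert 1 (Finset.Icc 2 n)) := by
    ext x; simp only [Finset.mem_range, Finset.mem_insert, Finset.mem_Icc]; omega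
  rw [h, Finset.sum_insert (by simp), Finset.sum_insert (by simp)]
  ring

private lemma lemA (n : ℕ) (hn : 2 ≤ n) :
    ∑ j ∈ Finset.Icc 2 n, ((n+1).choose j : ℚ) * bernoulli j = -1 + (n+1)/2 := by
  have h := sum_bernoulli (n+1)
  rw [if_neg (by omega), split_sum n hn] at h
  simp only [Nat.choose_zero_right, Nat.choose_one_right, bernoulli_zero, bernoulli_one] at h
  push_cast at h ⊢
  linarith

private lemma lemB (n : ℕ) (hn : 2 ≤ n) :
    ∑ j ∈ Finset.Icc 2 n, ((n+1).choose j : ℚ) * bernoulli j / 2^(j-1)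
      = (n+1)/2^n - 2 + (n+1)/2 := by
  have h := sum_range_pow 2 n
  have hL : ∑ k ∈ Finset.range 2, (k:ℚ)^n = 1 := by
    rw [Finset.sum_range_succ, Finset.sum_range_one]
    push_cast
    rw [zero_pow (show n ≠ 0 by omega), one_pow, zero_add]
  rw [hL] at h
  push_cast at h
  have hn1 : ((n:ℚ)+1) ≠ 0 := by positivity
  rw [← Finset.sum_div, eq_div_iff hn1, one_mul, split_sum n hn] at h
  simp only [Nat.choose_zero_right, Nat.choose_one_right, bernoulli_zero, bernoulli_one,
    Nat.cast_one, Nat.sub_zero, Nat.add_sub_cancel, Nat.cast_add, one_mul, mul_one] at h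
  have ht : ∀ j ∈ Finset.Icc 2 n, ((n+1).choose j : ℚ) * bernoulli j / 2^(j-1)
      = bernoulli j * ((n+1).choose j : ℚ) * 2^(n+1-j) / 2^n := by
    intro j hj
    rw [Finset.mem_Icc] at hj
    have h4 : (2:ℚ)^(n+1-j) * 2^(j-1) = 2^n := by
      rw [← pow_add]; congr 1; omega
    rw [div_eq_div_iff (by positivity) (by positivity)]
    linear_combination (-(bernoulli j * ((n+1).choose j : ℚ))) * h4
  rw [Finset.sum_congr rfl ht, ← Finset.sum_div]
  have h2n : (2:ℚ)^n ≠ 0 := by positivity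
  rw [pow_succ] at h
  field_simp
  linear_combination (-2) * h

private lemma key (n : ℕ) (hn : 2 ≤ n) :
    ∑ j ∈ Finset.Icc 2 n,
        (bernoulli j / (j.factorial : ℚ) * (1 - 1/(2:ℚ)^(j-1))) / ((n - j + 1).factorial : ℚ)
      = 1/((n+1).factorial : ℚ) - 1/((2:ℚ)^n * (n.factorial : ℚ)) := by
  have hterm : ∀ j ∈ Finset.Icc 2 n,
      (bernoulli j / (j.factorial : ℚ) * (1 - 1/(2:ℚ)^(j-1))) / ((n - j + 1).factorial : ℚ)
        = (((n+1).choose j : ℚ) * bernoulli j - ((n+1).choose j : ℚ) * bernoulli j / 2^(j-1))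
            / ((n+1).factorial : ℚ) := by
    intro j hj
    rw [Finset.mem_Icc] at hj
    have hsub : n - j + 1 = n + 1 - j := by omega
    have hcf := Nat.choose_mul_factorial_mul_factorial (show j ≤ n+1 by omega)
    have hcfq : (((n+1).choose j : ℚ)) * (j.factorial : ℚ) * ((n+1-j).factorial : ℚ)
        = ((n+1).factorial : ℚ) := by exact_mod_cast congrArg (Nat.cast (R := ℚ)) hcf
    rw [hsub]
    have hf1 : (j.factorial : ℚ) ≠ 0 := by exact_mod_cast j.factorial_ne_zero
    have hf2 : (((n+1-j).factorial : ℚ)) ≠ 0 := by exact_mod_cast (n+1-j).factorial_ne_zero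
    have hf3 : (((n+1).factorial : ℚ)) ≠ 0 := by exact_mod_cast (n+1).factorial_ne_zero
    have hp : (2:ℚ)^(j-1) ≠ 0 := by positivity
    field_simp
    linear_combination (bernoulli j * (1 - 2^(j-1))) * hcfq
  rw [Finset.sum_congr rfl hterm, ← Finset.sum_div, Finset.sum_sub_distrib,
    lemA n hn, lemB n hn]
  have hfact : (((n+1).factorial : ℚ)) = ((n:ℚ)+1) * (n.factorial : ℚ) := by
    rw [Nat.factorial_succ]; push_cast; ring
  have hf : ((n.factorial : ℚ)) ≠ 0 := by exact_mod_cast n.factorial_ne_zero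
  have hn1 : ((n:ℚ)+1) ≠ 0 := by positivity
  have hp : (2:ℚ)^n ≠ 0 := by positivity
  rw [hfact]
  field_simp
  ring

/-- If `β : ℕ → ℚ` satisfies, for all `n ≥ 2`,
`β n = −∑_{j=2}^{n-1} β j/(n−j+1)! + 1/(n+1)! − 1/(2^n·n!)`,
then `β n = (B_n/n!)·(1 − 1/2^{n−1})` for all `n ≥ 2`. -/
theorem stmt_4 (β : ℕ → ℚ)
    (hβ : ∀ n, 2 ≤ n →
      β n = -∑ j ∈ Finset.Icc 2 (n - 1), β j / ((n - j + 1).factorial : ℚ)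
        + 1 / ((n + 1).factorial : ℚ) - 1 / ((2 : ℚ) ^ n * (n.factorial : ℚ))) :
    ∀ n, 2 ≤ n → β n = bernoulli n / (n.factorial : ℚ) * (1 - 1 / (2 : ℚ) ^ (n - 1)) := by
  intro n
  induction n using Nat.strong_induction_on with
  | _ n ih =>
    intro hn
    rw [hβ n hn]
    have hsum : ∑ j ∈ Finset.Icc 2 (n - 1), β j / ((n - j + 1).factorial : ℚ)
        = ∑ j ∈ Finset.Icc 2 (n - 1),
            (bernoulli j / (j.factorial : ℚ) * (1 - 1/(2:ℚ)^(j-1))) / ((n - j + 1).factorial : ℚ) := by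
      refine Finset.sum_congr rfl fun j hj => ?_
      rw [Finset.mem_Icc] at hj
      rw [ih j (by omega) hj.1]
    rw [hsum]
    have hk := key n hn
    obtain ⟨m, rfl⟩ : ∃ m, n = m + 1 := ⟨n - 1, by omega⟩
    rw [Finset.sum_Icc_succ_top (by omega)] at hk
    simp only [Nat.add_sub_cancel] at *
    have hlast : ((m + 1 - (m + 1) + 1).factorial : ℚ) = 1 := by
      norm_num
    rw [hlast, div_one] at hk
    linarith
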